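/- Fix an integer N ≥ 2, γ > 0 and ω > 0. Suppose ε ↦ (p*(ε), q*(ε), β*(ε)) is a real-analytic map on an interval (−ε₀, ε₀) with values in ℝ^N × ℝ^N × ℝ such that for every ε: G(p*(ε), q*(ε); ε, ω, γ, β*(ε)) = 0, q*₁(ε) = 0, and for ε ≠ 0 one has p*_N(ε) ≠ 0 and p*_{N−1}(ε) ≠ 0; and at ε = 0: p*(0) = (√ω, 0, …, 0), q*(0) = 0, β*(0) = 0. Then the phase difference between the last two oscillators, ψ_{N−1}(ε) := arctan(q*_N(ε)/p*_N(ε)) − arctan(q*_{N−1}(ε)/p*_{N−1}(ε)), satisfies lim_{ε→0, ε≠0} ψ_{N−1}(ε) = arctan(γ/ω); in particular, to leading order ψ_{N−1} = γ/ω, independently of the number of sites N. -/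

import Mathlib

/-- The discrete Laplacian on `Fin N → ℝ` with the boundary conventions
`(Δx)_1 = x_2 − x_1`, `(Δx)_N = x_{N−1} − x_N`. -/
def lap {N : ℕ} (x : Fin N → ℝ) (j : Fin N) : ℝ :=
  (if h : j.val + 1 < N then x ⟨j.val + 1, h⟩ else x j)
  + (if 0 < j.val then x ⟨j.val - 1, lt_of_le_of_lt (Nat.sub_le _ _) j.isLt⟩ else x j)
  - 2 * x j

/-- The damped and driven dNLS vector field in the rotating frame, in real
coordinates `(p, q)`, with parameters `ε, ω, γ, β`. -/
def G (N : ℕ) (ε ω γ β : ℝ) (u : (Fin N → ℝ) × (Fin N → ℝ)) :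
    (Fin N → ℝ) × (Fin N → ℝ) :=
  (fun j => ε * lap u.2 j + ω * u.2 j - (u.1 j ^ 2 + u.2 j ^ 2) * u.2 j
      + (if j.val = 0 then β * u.1 j else 0)
      - (if j.val = N - 1 then γ * u.1 j else 0),
   fun j => -(ε * lap u.1 j) - ω * u.1 j + (u.1 j ^ 2 + u.2 j ^ 2) * u.1 j
      + (if j.val = 0 then β * u.2 j else 0)
      - (if j.val = N - 1 then γ * u.2 j else 0))

open Filter Topology

/-- The `p`-coordinate functions, indexed by naturals. -/
def cP {N : ℕ} (u : ℝ → (Fin N → ℝ) × (Fin N → ℝ)) (j : ℕ) (ε : ℝ) : ℝ :=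
  if h : j < N then (u ε).1 ⟨j, h⟩ else 0

/-- The `q`-coordinate functions, indexed by naturals. -/
def cQ {N : ℕ} (u : ℝ → (Fin N → ℝ) × (Fin N → ℝ)) (j : ℕ) (ε : ℝ) : ℝ :=
  if h : j < N then (u ε).2 ⟨j, h⟩ else 0

lemma cP_eq {N : ℕ} (u : ℝ → (Fin N → ℝ) × (Fin N → ℝ)) (j : ℕ) (h : j < N) (ε : ℝ) :
    cP u j ε = (u ε).1 ⟨j, h⟩ := dif_pos h

lemma cQ_eq {N : ℕ} (u : ℝ → (Fin N → ℝ) × (Fin N → ℝ)) (j : ℕ) (h : j < N) (ε : ℝ) :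
    cQ u j ε = (u ε).2 ⟨j, h⟩ := dif_pos h

/-- `f` vanishes at `0` to order at least `k`. -/
def OrdGe (f : ℝ → ℝ) (k : ℕ) : Prop :=
  ∃ h : ℝ → ℝ, AnalyticAt ℝ h 0 ∧ ∀ᶠ ε in 𝓝 (0:ℝ), f ε = ε ^ k * h ε

lemma ordGe_of_analytic {f : ℝ → ℝ} (hf : AnalyticAt ℝ f 0) : OrdGe f 0 :=
  ⟨f, hf, by filter_upwards with ε; simp⟩

lemma OrdGe.mono {f : ℝ → ℝ} {k m : ℕ} (hf : OrdGe f k) (hm : m ≤ k) : OrdGe f m := by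
  obtain ⟨h, hh, he⟩ := hf
  refine ⟨fun ε => ε ^ (k - m) * h ε, (analyticAt_id.pow _).mul hh, ?_⟩
  filter_upwards [he] with ε hε
  rw [hε, ← mul_assoc, ← pow_add]
  congr 2
  omega

lemma ordGe_of_eventually_zero {f : ℝ → ℝ} (hf : ∀ᶠ ε in 𝓝 (0:ℝ), f ε = 0) (k : ℕ) :
    OrdGe f k :=
  ⟨fun _ => 0, analyticAt_const, by filter_upwards [hf] with ε h; simp [h]⟩

lemma ordGe_step {a b c f : ℝ → ℝ} {k : ℕ}
    (hc : AnalyticAt ℝ c 0) (hc0 : c 0 ≠ 0)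
    (ha : OrdGe a k) (hb : OrdGe b k)
    (heq : ∀ᶠ ε in 𝓝 (0:ℝ), ε * (a ε + b ε) = c ε * f ε) : OrdGe f (k + 1) := by
  obtain ⟨ha', hha, hea⟩ := ha
  obtain ⟨hb', hhb, heb⟩ := hb
  refine ⟨fun ε => (ha' ε + hb' ε) / c ε, (hha.add hhb).div hc hc0, ?_⟩
  have hcne : ∀ᶠ ε in 𝓝 (0:ℝ), c ε ≠ 0 := hc.continuousAt.eventually_ne hc0
  filter_upwards [hea, heb, heq, hcne] with ε h1 h2 h3 h4
  have : c ε * f ε = c ε * (ε ^ (k + 1) * ((ha' ε + hb' ε) / c ε)) := by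
    rw [← h3, h1, h2]; field_simp; ring
  exact mul_left_cancel₀ h4 this

lemma not_ordGe_succ {f g : ℝ → ℝ} {m : ℕ} (hg : AnalyticAt ℝ g 0) (hg0 : g 0 ≠ 0)
    (hfg : ∀ᶠ ε in 𝓝 (0:ℝ), f ε = ε ^ m * g ε) (h : OrdGe f (m + 1)) : False := by
  obtain ⟨h', hh', he'⟩ := h
  have key : g =ᶠ[𝓝[≠] (0:ℝ)] fun ε => ε * h' ε := by
    refine eventually_nhdsWithin_iff.mpr ?_
    filter_upwards [hfg, he'] with ε h1 h2 hε
    have hε' : (ε:ℝ) ≠ 0 := by simpa using hε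
    have hpow : (ε:ℝ) ^ m ≠ 0 := pow_ne_zero _ hε'
    have : ε ^ m * g ε = ε ^ m * (ε * h' ε) := by rw [← h1, h2]; ring
    exact mul_left_cancel₀ hpow this
  have t1 : Filter.Tendsto g (𝓝[≠] (0:ℝ)) (𝓝 (g 0)) :=
    hg.continuousAt.continuousWithinAt
  have t2 : Filter.Tendsto (fun ε => ε * h' ε) (𝓝[≠] (0:ℝ)) (𝓝 0) := by
    have : Filter.Tendsto (fun ε : ℝ => ε * h' ε) (𝓝 (0:ℝ)) (𝓝 (0 * h' 0)) :=
      (continuousAt_id.mul hh'.continuousAt)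
    simpa using this.mono_left nhdsWithin_le_nhds
  exact hg0 (tendsto_nhds_unique t1 (t2.congr' key.symm))

/-- The twist of the last phase difference: `ψ_{N−1} → arctan(γ/ω)` as `ε → 0`
(Theorem 2.4). -/
theorem stmt_2 (N : ℕ) (hN : 2 ≤ N) (γ ω : ℝ) (hγ : 0 < γ) (hω : 0 < ω)
    (ε₀ : ℝ) (hε₀ : 0 < ε₀)
    (u : ℝ → (Fin N → ℝ) × (Fin N → ℝ)) (βs : ℝ → ℝ)
    (hanal : AnalyticOnNhd ℝ (fun ε => (u ε, βs ε)) (Set.Ioo (-ε₀) ε₀))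
    (hG : ∀ ε ∈ Set.Ioo (-ε₀) ε₀, G N ε ω γ (βs ε) (u ε) = 0)
    (hq1 : ∀ ε ∈ Set.Ioo (-ε₀) ε₀, (u ε).2 ⟨0, by omega⟩ = 0)
    (hne : ∀ ε ∈ Set.Ioo (-ε₀) ε₀, ε ≠ 0 →
      (u ε).1 ⟨N - 1, by omega⟩ ≠ 0 ∧ (u ε).1 ⟨N - 2, by omega⟩ ≠ 0)
    (h0p : (u 0).1 = fun j => if j.val = 0 then Real.sqrt ω else 0)
    (h0q : (u 0).2 = 0) (h0β : βs 0 = 0) :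
    Filter.Tendsto
      (fun ε => Real.arctan ((u ε).2 ⟨N - 1, by omega⟩ / (u ε).1 ⟨N - 1, by omega⟩)
        - Real.arctan ((u ε).2 ⟨N - 2, by omega⟩ / (u ε).1 ⟨N - 2, by omega⟩))
      (nhdsWithin 0 (Set.Ioo (-ε₀) ε₀ \ {0}))
      (nhds (Real.arctan (γ / ω))) := by
  have hN1lt : N - 1 < N := by omega
  have hN2lt : N - 2 < N := by omega
  have hmem0 : (0:ℝ) ∈ Set.Ioo (-ε₀) ε₀ := ⟨by linarith, hε₀⟩
  have hIoo : Set.Ioo (-ε₀) ε₀ ∈ 𝓝 (0:ℝ) := Ioo_mem_nhds (by linarith) hε₀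
  have hev : ∀ᶠ ε in 𝓝 (0:ℝ), ε ∈ Set.Ioo (-ε₀) ε₀ := hIoo
  set P : ℕ → ℝ → ℝ := cP u with hPdef
  set Q : ℕ → ℝ → ℝ := cQ u with hQdef
  -- analyticity of coordinates
  have hu_anal : AnalyticAt ℝ (fun ε => (u ε, βs ε)) 0 := hanal 0 hmem0
  have hPa : ∀ j : ℕ, AnalyticAt ℝ (P j) 0 := by
    intro j
    rw [hPdef]
    by_cases h : j < N
    · have : cP u j = (fun x : ((Fin N → ℝ) × (Fin N → ℝ)) × ℝ => x.1.1 ⟨j, h⟩) ∘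
          (fun ε => (u ε, βs ε)) := by
        funext ε; rw [cP_eq u j h]; rfl
      rw [this]
      exact (((ContinuousLinearMap.proj (R := ℝ) (φ := fun _ : Fin N => ℝ) ⟨j, h⟩).comp
        ((ContinuousLinearMap.fst ℝ (Fin N → ℝ) (Fin N → ℝ)).comp
          (ContinuousLinearMap.fst ℝ ((Fin N → ℝ) × (Fin N → ℝ)) ℝ))).analyticAt _).comp hu_anal
    · have : cP u j = fun _ => (0:ℝ) := by funext ε; exact dif_neg h
      rw [this]; exact analyticAt_const
  have hQa : ∀ j : ℕ, AnalyticAt ℝ (Q j) 0 := by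
    intro j
    rw [hQdef]
    by_cases h : j < N
    · have : cQ u j = (fun x : ((Fin N → ℝ) × (Fin N → ℝ)) × ℝ => x.1.2 ⟨j, h⟩) ∘
          (fun ε => (u ε, βs ε)) := by
        funext ε; rw [cQ_eq u j h]; rfl
      rw [this]
      exact (((ContinuousLinearMap.proj (R := ℝ) (φ := fun _ : Fin N => ℝ) ⟨j, h⟩).comp
        ((ContinuousLinearMap.snd ℝ (Fin N → ℝ) (Fin N → ℝ)).comp
          (ContinuousLinearMap.fst ℝ ((Fin N → ℝ) × (Fin N → ℝ)) ℝ))).analyticAt _).comp hu_anal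
    · have : cQ u j = fun _ => (0:ℝ) := by funext ε; exact dif_neg h
      rw [this]; exact analyticAt_const
  -- values at 0
  have hP0 : ∀ j : ℕ, 1 ≤ j → P j 0 = 0 := by
    intro j hj
    rw [hPdef]
    by_cases h : j < N
    · rw [cP_eq u j h, h0p]
      exact if_neg (show ¬(j = 0) by omega)
    · exact dif_neg h
  have hQ0 : ∀ j : ℕ, Q j 0 = 0 := by
    intro j
    rw [hQdef]
    by_cases h : j < N
    · rw [cQ_eq u j h, h0q]; rfl
    · exact dif_neg h
  -- extraction of the components of G = 0
  have hcomp1 : ∀ ε ∈ Set.Ioo (-ε₀) ε₀, ∀ j : Fin N,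
      ε * lap (u ε).2 j + ω * (u ε).2 j - ((u ε).1 j ^ 2 + (u ε).2 j ^ 2) * (u ε).2 j
      + (if j.val = 0 then βs ε * (u ε).1 j else 0)
      - (if j.val = N - 1 then γ * (u ε).1 j else 0) = 0 := by
    intro ε hε j
    exact congrFun (congrArg Prod.fst (hG ε hε)) j
  have hcomp2 : ∀ ε ∈ Set.Ioo (-ε₀) ε₀, ∀ j : Fin N,
      -(ε * lap (u ε).1 j) - ω * (u ε).1 j + ((u ε).1 j ^ 2 + (u ε).2 j ^ 2) * (u ε).1 j
      + (if j.val = 0 then βs ε * (u ε).2 j else 0)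
      - (if j.val = N - 1 then γ * (u ε).2 j else 0) = 0 := by
    intro ε hε j
    exact congrFun (congrArg Prod.snd (hG ε hε)) j
  -- interior equations for q
  have hEq_int : ∀ j : ℕ, 1 ≤ j → j ≤ N - 2 → ∀ᶠ ε in 𝓝 (0:ℝ),
      ε * (Q (j+1) ε + Q (j-1) ε) = (2*ε - ω + (P j ε^2 + Q j ε^2)) * Q j ε := by
    intro j hj1 hj2
    have hjN : j < N := by omega
    have hj1N : j + 1 < N := by omega
    have hjm1N : j - 1 < N := by omega
    have h0j : 0 < j := hj1
    have hne0 : ¬ (j = 0) := by omega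
    have hneN : ¬ (j = N - 1) := by omega
    filter_upwards [hev] with ε hε
    have hc := hcomp1 ε hε ⟨j, hjN⟩
    simp only [lap, Fin.isValue] at hc
    rw [dif_pos (show (⟨j, hjN⟩ : Fin N).val + 1 < N from hj1N),
      if_pos (show 0 < (⟨j, hjN⟩ : Fin N).val from h0j),
      if_neg (show ¬ ((⟨j, hjN⟩ : Fin N).val = 0) from hne0),
      if_neg (show ¬ ((⟨j, hjN⟩ : Fin N).val = N - 1) from hneN)] at hc
    rw [hQdef, hPdef, cQ_eq u (j+1) hj1N, cQ_eq u (j-1) hjm1N, cQ_eq u j hjN, cP_eq u j hjN]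
    linear_combination hc
  -- last site equations
  have hlast_q : ∀ᶠ ε in 𝓝 (0:ℝ),
      ε * Q (N-2) ε = (ε - ω + (P (N-1) ε^2 + Q (N-1) ε^2)) * Q (N-1) ε + γ * P (N-1) ε := by
    filter_upwards [hev] with ε hε
    have hc := hcomp1 ε hε ⟨N-1, hN1lt⟩
    simp only [lap, Fin.isValue] at hc
    rw [dif_neg (show ¬ ((⟨N-1, hN1lt⟩ : Fin N).val + 1 < N) from by simp; omega),
      if_pos (show 0 < (⟨N-1, hN1lt⟩ : Fin N).val from by simp; omega),
      if_neg (show ¬ ((⟨N-1, hN1lt⟩ : Fin N).val = 0) from by simp; omega)] at hc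
    simp only [if_true] at hc
    rw [hQdef, hPdef, show N - 2 = N - 1 - 1 from by omega,
      cQ_eq u (N-1-1) (by omega), cQ_eq u (N-1) hN1lt, cP_eq u (N-1) hN1lt]
    linear_combination hc
  have hlast_p : ∀ᶠ ε in 𝓝 (0:ℝ),
      ε * P (N-2) ε = (ε - ω + (P (N-1) ε^2 + Q (N-1) ε^2)) * P (N-1) ε - γ * Q (N-1) ε := by
    filter_upwards [hev] with ε hε
    have hc := hcomp2 ε hε ⟨N-1, hN1lt⟩
    simp only [lap, Fin.isValue] at hc
    rw [dif_neg (show ¬ ((⟨N-1, hN1lt⟩ : Fin N).val + 1 < N) from by simp; omega),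
      if_pos (show 0 < (⟨N-1, hN1lt⟩ : Fin N).val from by simp; omega),
      if_neg (show ¬ ((⟨N-1, hN1lt⟩ : Fin N).val = 0) from by simp; omega)] at hc
    simp only [if_true] at hc
    rw [hQdef, hPdef, show N - 2 = N - 1 - 1 from by omega,
      cQ_eq u (N-1) hN1lt, cP_eq u (N-1-1) (by omega), cP_eq u (N-1) hN1lt]
    linear_combination -hc
  -- q₀ ≡ 0
  have hQ0germ : ∀ᶠ ε in 𝓝 (0:ℝ), Q 0 ε = 0 := by
    filter_upwards [hev] with ε hε
    rw [hQdef, cQ_eq u 0 (by omega)]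
    exact hq1 ε hε
  -- coefficient functions
  have hSa : ∀ j : ℕ, AnalyticAt ℝ (fun ε => 2*ε - ω + (P j ε^2 + Q j ε^2)) 0 := fun j =>
    ((analyticAt_const.mul analyticAt_id).sub analyticAt_const).add
      (((hPa j).pow 2).add ((hQa j).pow 2))
  have hSne : ∀ j : ℕ, 1 ≤ j → 2*(0:ℝ) - ω + (P j 0^2 + Q j 0^2) ≠ 0 := by
    intro j hj
    rw [hP0 j hj, hQ0 j]
    simpa using hω.ne'
  -- the propagation of lower bounds on vanishing orders down the chain
  have chain : ∀ n : ℕ, OrdGe (Q (N-1)) n → ∀ j, 1 ≤ j → j ≤ N - 1 →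
      OrdGe (Q j) (n + (N - 1 - j)) := by
    intro n hn
    have main : ∀ k : ℕ, ∀ j, 1 ≤ j → j ≤ N - 1 → OrdGe (Q j) (min (n + (N - 1 - j)) k) := by
      intro k
      induction k with
      | zero => exact fun j h1 h2 => (ordGe_of_analytic (hQa j)).mono (by omega)
      | succ k ih =>
        intro j h1 h2
        by_cases hje : j = N - 1
        · subst hje
          exact hn.mono (by omega)
        · have hj2 : j ≤ N - 2 := by omega
          have ha : OrdGe (Q (j+1)) (min (n + (N - 2 - j)) k) := by
            have h := ih (j+1) (by omega) (by omega)
            rwa [show N - 1 - (j+1) = N - 2 - j from by omega] at h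
          have hb : OrdGe (Q (j-1)) (min (n + (N - 2 - j)) k) := by
            by_cases hj1 : j = 1
            · exact ordGe_of_eventually_zero
                (by rw [show j - 1 = 0 from by omega]; exact hQ0germ) _
            · exact (ih (j-1) (by omega) (by omega)).mono (by omega)
          exact (ordGe_step (hSa j) (hSne j h1) ha hb (hEq_int j h1 hj2)).mono (by omega)
    intro j h1 h2
    have h := main (n + N) j h1 h2
    rwa [min_eq_left (by omega)] at h
  -- p_{N-1} is not a zero germ
  have hF' : ∀ᶠ ε' in 𝓝[≠] (0:ℝ), ε' ∈ Set.Ioo (-ε₀) ε₀ ∧ ε' ≠ 0 := by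
    filter_upwards [hev.filter_mono nhdsWithin_le_nhds, self_mem_nhdsWithin] with ε h1 h2
    exact ⟨h1, h2⟩
  have hPN1ne_germ : ¬ ∀ᶠ ε in 𝓝 (0:ℝ), P (N-1) ε = 0 := by
    intro hz
    obtain ⟨ε, ⟨hmem, hne0⟩, hval⟩ := (hF'.and (hz.filter_mono nhdsWithin_le_nhds)).exists
    apply (hne ε hmem hne0).1
    rw [hPdef, cP_eq u (N-1) hN1lt] at hval
    exact hval
  -- q_{N-1} is not a zero germ
  have hQN1ne_germ : ¬ ∀ᶠ ε in 𝓝 (0:ℝ), Q (N-1) ε = 0 := by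
    intro hz
    have hOrdP : ∀ k : ℕ, OrdGe (P (N-1)) (k+1) := by
      intro k
      have hq2 : OrdGe (Q (N-2)) k := by
        by_cases h2 : N = 2
        · exact ordGe_of_eventually_zero
            (by rw [show N - 2 = 0 from by omega]; exact hQ0germ) k
        · have h := chain k (ordGe_of_eventually_zero hz k) (N-2) (by omega) (by omega)
          exact h.mono (by omega)
      obtain ⟨w, hwa, hwe⟩ := hq2
      refine ⟨fun ε => w ε / γ, hwa.div analyticAt_const hγ.ne', ?_⟩
      filter_upwards [hwe, hlast_q, hz] with ε e1 e2 e3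
      rw [e3] at e2
      have h4 : γ * P (N-1) ε = ε * (ε ^ k * w ε) := by
        rw [← e1]; linear_combination -e2
      refine mul_left_cancel₀ hγ.ne' ?_
      rw [h4]; field_simp; ring
    obtain ⟨m, g, hga, hg0, hge⟩ :=
      (hPa (N-1)).exists_eventuallyEq_pow_smul_nonzero_iff.mpr hPN1ne_germ
    exact not_ordGe_succ hga hg0 (by filter_upwards [hge] with ε h; simpa using h) (hOrdP m)
  -- exact order decomposition of q_{N-1}
  obtain ⟨n, B, hBa, hB0, hBe⟩ : ∃ (n : ℕ) (B : ℝ → ℝ), AnalyticAt ℝ B 0 ∧ B 0 ≠ 0 ∧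
      ∀ᶠ ε in 𝓝 (0:ℝ), Q (N-1) ε = ε ^ n * B ε := by
    obtain ⟨n, g, h1, h2, h3⟩ :=
      (hQa (N-1)).exists_eventuallyEq_pow_smul_nonzero_iff.mpr hQN1ne_germ
    exact ⟨n, g, h1, h2, by filter_upwards [h3] with ε h; simpa using h⟩
  -- the coefficient at the last site
  have hcla : AnalyticAt ℝ (fun ε => ε - ω + (P (N-1) ε^2 + Q (N-1) ε^2)) 0 :=
    (analyticAt_id.sub analyticAt_const).add (((hPa (N-1)).pow 2).add ((hQa (N-1)).pow 2))
  have hclval : (0:ℝ) - ω + (P (N-1) 0^2 + Q (N-1) 0^2) = -ω := by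
    rw [hP0 (N-1) (by omega), hQ0 (N-1)]; ring
  have hclne0 : (0:ℝ) - ω + (P (N-1) 0^2 + Q (N-1) 0^2) ≠ 0 := by
    rw [hclval]; exact neg_ne_zero.mpr hω.ne'
  have hclne_ev : ∀ᶠ ε in 𝓝 (0:ℝ), (ε - ω + (P (N-1) ε^2 + Q (N-1) ε^2)) ≠ 0 :=
    hcla.continuousAt.eventually_ne hclne0
  set F := nhdsWithin (0:ℝ) (Set.Ioo (-ε₀) ε₀ \ {0}) with hFdef
  have hFle : F ≤ 𝓝 (0:ℝ) := nhdsWithin_le_nhds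
  have hFmem : ∀ᶠ ε in F, ε ∈ Set.Ioo (-ε₀) ε₀ ∧ ε ≠ 0 := by
    filter_upwards [self_mem_nhdsWithin] with ε h
    exact ⟨h.1, by simpa using h.2⟩
  -- the two ratio limits
  have hTS : Filter.Tendsto (fun ε => Q (N-1) ε / P (N-1) ε) F (𝓝 (γ/ω)) ∧
      Filter.Tendsto (fun ε => Q (N-2) ε / P (N-2) ε) F (𝓝 0) := by
    by_cases hN2 : N = 2
    · -- case N = 2
      have hQ0germ2 : ∀ᶠ ε in 𝓝 (0:ℝ), Q (N-2) ε = 0 := by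
        rw [show N - 2 = 0 from by omega]; exact hQ0germ
      constructor
      · have hclt : Filter.Tendsto (fun ε => ε - ω + (P (N-1) ε^2 + Q (N-1) ε^2))
            (𝓝 (0:ℝ)) (𝓝 ((0:ℝ) - ω + (P (N-1) 0^2 + Q (N-1) 0^2))) := hcla.continuousAt
        rw [hclval] at hclt
        have h2 : Filter.Tendsto (fun ε => -γ / (ε - ω + (P (N-1) ε^2 + Q (N-1) ε^2)))
            (𝓝 (0:ℝ)) (𝓝 (-γ / -ω)) :=
          tendsto_const_nhds.div hclt (neg_ne_zero.mpr hω.ne')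
        rw [neg_div_neg_eq] at h2
        refine Filter.Tendsto.congr' ?_ (h2.mono_left hFle)
        filter_upwards [hFmem, (hlast_q.and (hQ0germ2.and hclne_ev)).filter_mono hFle]
          with ε h1 h2'
        obtain ⟨hmem, hne0⟩ := h1
        obtain ⟨hlq, hq0, hclne⟩ := h2'
        have hP1 : P (N-1) ε ≠ 0 := by
          rw [hPdef, cP_eq u (N-1) hN1lt]; exact (hne ε hmem hne0).1
        rw [hq0] at hlq
        rw [div_eq_div_iff hclne hP1]
        linear_combination hlq
      · refine Filter.Tendsto.congr' ?_ tendsto_const_nhds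
        filter_upwards [hQ0germ2.filter_mono hFle] with ε h
        rw [h, zero_div]
    · -- case N ≥ 3
      have hN3 : 3 ≤ N := by omega
      have hOrd3 : OrdGe (Q (N-3)) (n+2) := by
        by_cases h3 : N = 3
        · exact ordGe_of_eventually_zero
            (by rw [show N - 3 = 0 from by omega]; exact hQ0germ) _
        · have h := chain n ⟨B, hBa, hBe⟩ (N-3) (by omega) (by omega)
          rwa [show N - 1 - (N - 3) = 2 from by omega] at h
      obtain ⟨w3, hw3a, hw3e⟩ := hOrd3
      have hc2a : AnalyticAt ℝ (fun ε => 2*ε - ω + (P (N-2) ε^2 + Q (N-2) ε^2)) 0 := hSa (N-2)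
      have hc2ne : 2*(0:ℝ) - ω + (P (N-2) 0^2 + Q (N-2) 0^2) ≠ 0 := hSne (N-2) (by omega)
      set C : ℝ → ℝ :=
        fun ε => (B ε + ε^2 * w3 ε) / (2*ε - ω + (P (N-2) ε^2 + Q (N-2) ε^2)) with hCdef
      have hCa : AnalyticAt ℝ C 0 :=
        (hBa.add ((analyticAt_id.pow 2).mul hw3a)).div hc2a hc2ne
      have hQN2e : ∀ᶠ ε in 𝓝 (0:ℝ), Q (N-2) ε = ε^(n+1) * C ε := by
        have hint := hEq_int (N-2) (by omega) (by omega)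
        rw [show N - 2 + 1 = N - 1 from by omega, show N - 2 - 1 = N - 3 from by omega] at hint
        have hc2ne_ev : ∀ᶠ ε in 𝓝 (0:ℝ), (2*ε - ω + (P (N-2) ε^2 + Q (N-2) ε^2)) ≠ 0 :=
          hc2a.continuousAt.eventually_ne hc2ne
        filter_upwards [hint, hBe, hw3e, hc2ne_ev] with ε h1 h2 h3 h4
        refine mul_left_cancel₀ h4 ?_
        simp only [hCdef]
        rw [← h1, h2, h3]
        rw [mul_div_assoc', mul_div_assoc', mul_div_cancel_left₀ _ h4]
        ring
      set A : ℝ → ℝ :=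
        fun ε => (ε^2 * C ε - (ε - ω + (P (N-1) ε^2 + Q (N-1) ε^2)) * B ε) / γ with hAdef
      have hAa : AnalyticAt ℝ A 0 :=
        (((analyticAt_id.pow 2).mul hCa).sub (hcla.mul hBa)).div analyticAt_const hγ.ne'
      have hA0 : A 0 = ω * B 0 / γ := by
        simp only [hAdef]
        rw [hP0 (N-1) (by omega), hQ0 (N-1)]
        ring
      have hA0ne : A 0 ≠ 0 := by
        rw [hA0]; exact div_ne_zero (mul_ne_zero hω.ne' hB0) hγ.ne'
      have hPN1e : ∀ᶠ ε in 𝓝 (0:ℝ), P (N-1) ε = ε^n * A ε := by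
        filter_upwards [hlast_q, hQN2e, hBe] with ε h1 h2 h3
        refine mul_left_cancel₀ hγ.ne' ?_
        simp only [hAdef]
        have h4 : γ * P (N-1) ε = ε * (ε^(n+1) * C ε)
            - (ε - ω + (P (N-1) ε^2 + Q (N-1) ε^2)) * (ε^n * B ε) := by
          rw [← h2, ← h3]
          linear_combination -h1
        rw [h4]
        field_simp
        ring
      set D : ℝ → ℝ :=
        fun ε => (ε - ω + (P (N-1) ε^2 + Q (N-1) ε^2)) * A ε - γ * B ε with hDdef
      have hDa : AnalyticAt ℝ D 0 := (hcla.mul hAa).sub (analyticAt_const.mul hBa)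
      have hD0ne : D 0 ≠ 0 := by
        have hD0 : D 0 = -(ω^2 + γ^2) * B 0 / γ := by
          simp only [hDdef]
          rw [hA0, hP0 (N-1) (by omega), hQ0 (N-1)]
          field_simp
          ring
        rw [hD0]
        have hpos : (0:ℝ) < ω^2 + γ^2 := by positivity
        exact div_ne_zero (mul_ne_zero (neg_ne_zero.mpr hpos.ne') hB0) hγ.ne'
      have hPN2e : ∀ᶠ ε in 𝓝 (0:ℝ), ε * P (N-2) ε = ε^n * D ε := by
        filter_upwards [hlast_p, hPN1e, hBe] with ε h1 h2 h3
        rw [h1]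
        simp only [hDdef]
        rw [h2, h3]
        ring
      have hDne_ev : ∀ᶠ ε in 𝓝 (0:ℝ), D ε ≠ 0 := hDa.continuousAt.eventually_ne hD0ne
      have hAne_ev : ∀ᶠ ε in 𝓝 (0:ℝ), A ε ≠ 0 := hAa.continuousAt.eventually_ne hA0ne
      constructor
      · have hlim : Filter.Tendsto (fun ε => B ε / A ε) (𝓝 (0:ℝ)) (𝓝 (γ/ω)) := by
          have h : Filter.Tendsto (fun ε => B ε / A ε) (𝓝 (0:ℝ)) (𝓝 (B 0 / A 0)) :=
            hBa.continuousAt.div hAa.continuousAt hA0ne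
          have h2 : B 0 / A 0 = γ/ω := by
            rw [hA0, div_div_eq_mul_div, mul_comm ω (B 0), mul_div_mul_left _ _ hB0]
          rwa [h2] at h
        refine Filter.Tendsto.congr' ?_ (hlim.mono_left hFle)
        filter_upwards [hFmem, (hBe.and (hPN1e.and hAne_ev)).filter_mono hFle] with ε h1 h2
        obtain ⟨hmem, hne0⟩ := h1
        obtain ⟨hBe', hPN1e', hAne'⟩ := h2
        rw [hBe', hPN1e', mul_div_mul_left _ _ (pow_ne_zero n hne0)]
      · have hlim0 : Filter.Tendsto (fun ε => ε^2 * C ε / D ε) (𝓝 (0:ℝ)) (𝓝 0) := by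
          have h : Filter.Tendsto (fun ε => ε^2 * C ε / D ε) (𝓝 (0:ℝ))
              (𝓝 ((0:ℝ)^2 * C 0 / D 0)) :=
            (((analyticAt_id.pow 2).mul hCa).div hDa hD0ne).continuousAt
          simpa using h
        refine Filter.Tendsto.congr' ?_ (hlim0.mono_left hFle)
        filter_upwards [hFmem, (hQN2e.and (hPN2e.and hDne_ev)).filter_mono hFle] with ε h1 h2
        obtain ⟨hmem, hne0⟩ := h1
        obtain ⟨hq2, hp2, hDne'⟩ := h2
        have hp2' : P (N-2) ε = ε^n * D ε / ε := by
          rw [eq_div_iff hne0]; linear_combination hp2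
        rw [hq2, hp2', div_div_eq_mul_div,
          div_eq_div_iff hDne' (mul_ne_zero (pow_ne_zero n hne0) hDne')]
        ring
  -- final assembly
  obtain ⟨hT, hS⟩ := hTS
  have h1 := (Real.continuous_arctan.tendsto (γ/ω)).comp hT
  have h2 := (Real.continuous_arctan.tendsto 0).comp hS
  have h3 := h1.sub h2
  rw [Real.arctan_zero, sub_zero] at h3
  refine h3.congr fun ε => ?_
  simp only [Function.comp]
  rw [hQdef, hPdef, cQ_eq u (N-1) hN1lt, cP_eq u (N-1) hN1lt,
    cQ_eq u (N-2) hN2lt, cP_eq u (N-2) hN2lt]
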